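/- arXiv:2505.07156 — 4 statements merged into one kernel-verified Lean document; each statement's English description precedes it below -/
import Mathlib

section
/- Let F = H1 + N where H1 ∈ ℝ^{n×n} is symmetric positive definite and N ∈ ℝ^{n×n} is skew-symmetric. Then F is nonsingular and ‖F⁻¹‖_{H1⁻¹,H1} ≤ 1. -/
open Matrix

/-- The `H`-norm of a vector: `‖u‖_H = (uᵀ H u)^{1/2}`. -/
noncomputable def vnorm {α : Type*} [Fintype α] (H : Matrix α α ℝ) (u : α → ℝ) : ℝ :=
  Real.sqrt (u ⬝ᵥ (H *ᵥ u))

/-- The weighted operator norm `‖M‖_{H1,H2} = sup_{v ≠ 0} ‖M v‖_{H2} / ‖v‖_{H1}`.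
For a square matrix, `‖M‖_H = wnorm H H M`; the spectral norm is `wnorm 1 1 M`. -/
noncomputable def wnorm {α β : Type*} [Fintype α] [Fintype β]
    (H1 : Matrix α α ℝ) (H2 : Matrix β β ℝ) (M : Matrix β α ℝ) : ℝ :=
  sSup {r : ℝ | ∃ v : α → ℝ, v ≠ 0 ∧ r = vnorm H2 (M *ᵥ v) / vnorm H1 v}

private lemma cs_aux {n : ℕ} (H : Matrix (Fin n) (Fin n) ℝ) (hH : H.PosSemidef)
    (u w : Fin n → ℝ) : (u ⬝ᵥ H *ᵥ w) ^ 2 ≤ (u ⬝ᵥ H *ᵥ u) * (w ⬝ᵥ H *ᵥ w) := by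
  have hsym : ∀ a b : Fin n → ℝ, a ⬝ᵥ H *ᵥ b = b ⬝ᵥ H *ᵥ a := by
    intro a b
    have hs : Hᵀ = H := by
      have := hH.1
      rwa [Matrix.IsHermitian, conjTranspose_eq_transpose_of_trivial] at this
    rw [dotProduct_mulVec, ← mulVec_transpose, hs, dotProduct_comm]
  have key := discrim_le_zero (a := w ⬝ᵥ H *ᵥ w) (b := 2 * (u ⬝ᵥ H *ᵥ w)) (c := u ⬝ᵥ H *ᵥ u) ?_
  · rw [discrim] at key
    nlinarith
  · intro t
    have h0 := hH.dotProduct_mulVec_nonneg (u + t • w)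
    simp only [star_trivial] at h0
    have hexp : ((u + t • w) ⬝ᵥ H *ᵥ (u + t • w)) =
        (w ⬝ᵥ H *ᵥ w) * (t * t) + 2 * (u ⬝ᵥ H *ᵥ w) * t + u ⬝ᵥ H *ᵥ u := by
      rw [mulVec_add, mulVec_smul, dotProduct_add, add_dotProduct, add_dotProduct,
        dotProduct_smul, smul_dotProduct, smul_dotProduct, dotProduct_smul,
        hsym w u]
      simp only [smul_eq_mul]
      ring
    rw [hexp] at h0
    exact h0

theorem stmt_2 {n : ℕ} (F H1 N : Matrix (Fin n) (Fin n) ℝ)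
    (hF : F = H1 + N) (hH1 : H1.PosDef) (hN : Nᵀ = -N) :
    IsUnit F.det ∧ wnorm H1⁻¹ H1 F⁻¹ ≤ 1 := by
  have hNskew : ∀ x : Fin n → ℝ, x ⬝ᵥ N *ᵥ x = 0 := by
    intro x
    have h1 : x ⬝ᵥ N *ᵥ x = x ⬝ᵥ Nᵀ *ᵥ x := by
      rw [dotProduct_mulVec, ← mulVec_transpose, dotProduct_comm]
    rw [hN] at h1
    simp only [neg_mulVec, dotProduct_neg] at h1
    linarith
  have hFquad : ∀ x : Fin n → ℝ, x ⬝ᵥ F *ᵥ x = x ⬝ᵥ H1 *ᵥ x := by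
    intro x
    rw [hF, Matrix.add_mulVec, dotProduct_add, hNskew x, add_zero]
  have hdet : IsUnit F.det := by
    rw [← Matrix.isUnit_iff_isUnit_det, ← Matrix.mulVec_injective_iff_isUnit]
    intro x y hxy
    by_contra hne
    have hz : F *ᵥ (x - y) = 0 := by rw [Matrix.mulVec_sub, hxy, sub_self]
    have hzne : x - y ≠ 0 := sub_ne_zero.mpr (fun h => hne h)
    have := hH1.dotProduct_mulVec_pos hzne
    simp only [star_trivial] at this
    rw [← hFquad (x - y), hz, dotProduct_zero] at this
    exact lt_irrefl 0 this
  refine ⟨hdet, ?_⟩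
  apply Real.sSup_le _ zero_le_one
  rintro r ⟨v, hv, rfl⟩
  set u := F⁻¹ *ᵥ v with hu
  have hFu : F *ᵥ u = v := by
    rw [hu, Matrix.mulVec_mulVec, Matrix.mul_nonsing_inv F hdet, Matrix.one_mulVec]
  have hH1inv : (H1⁻¹).PosDef := hH1.inv
  have hden : 0 < vnorm H1⁻¹ v := Real.sqrt_pos.mpr (hH1inv.dotProduct_mulVec_pos hv)
  rw [div_le_one hden]
  -- key inequality
  set w := H1⁻¹ *ᵥ v with hw
  have hvw : H1 *ᵥ w = v := by
    rw [hw, Matrix.mulVec_mulVec, Matrix.mul_nonsing_inv H1 ((Matrix.isUnit_iff_isUnit_det H1).mp hH1.isUnit), Matrix.one_mulVec]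
  have ha : u ⬝ᵥ H1 *ᵥ u = u ⬝ᵥ v := by rw [← hFquad u, hFu]
  have hc : w ⬝ᵥ H1 *ᵥ w = v ⬝ᵥ H1⁻¹ *ᵥ v := by
    rw [hvw, dotProduct_comm, hw]
  have hcs := cs_aux H1 hH1.posSemidef u w
  rw [hc, hvw] at hcs
  have hanneg : 0 ≤ u ⬝ᵥ H1 *ᵥ u := by
    have := hH1.posSemidef.dotProduct_mulVec_nonneg u; simpa using this
  have hcnneg : 0 ≤ v ⬝ᵥ H1⁻¹ *ᵥ v := by
    have := hH1inv.posSemidef.dotProduct_mulVec_nonneg v; simpa using this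
  have hfinal : u ⬝ᵥ H1 *ᵥ u ≤ v ⬝ᵥ H1⁻¹ *ᵥ v := by
    rcases eq_or_lt_of_le hanneg with h0 | hpos
    · linarith
    · rw [ha] at hcs
      nlinarith [ha]
  unfold vnorm
  exact Real.sqrt_le_sqrt hfinal
end

section
/- Let M ∈ ℝ^{n×n} be skew-symmetric with spectral norm ‖M‖₂ ≤ η. Then I + M is nonsingular and for every nonzero y ∈ ℝⁿ one has yᵀ(I + M)⁻¹y ≥ (yᵀy)/(1 + η)². -/
open Matrix

noncomputable def enrm {n : ℕ} (u : Fin n → ℝ) : ℝ :=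
  ‖(WithLp.equiv 2 (Fin n → ℝ)).symm u‖

lemma enrm_eq {n : ℕ} (u : Fin n → ℝ) : enrm u = Real.sqrt (u ⬝ᵥ u) := by
  rw [enrm, EuclideanSpace.norm_eq]
  congr 1
  simp [dotProduct, Real.norm_eq_abs, sq_abs, sq]

lemma enrm_nonneg {n : ℕ} (u : Fin n → ℝ) : 0 ≤ enrm u := norm_nonneg _

lemma dot_self_eq {n : ℕ} (u : Fin n → ℝ) : u ⬝ᵥ u = enrm u ^ 2 := by
  rw [enrm_eq, Real.sq_sqrt]
  exact Finset.sum_nonneg fun i _ => mul_self_nonneg _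

lemma enrm_pos {n : ℕ} {u : Fin n → ℝ} (h : u ≠ 0) : 0 < enrm u := by
  rw [enrm, norm_pos_iff]
  simpa using h

lemma enrm_add_le {n : ℕ} (u v : Fin n → ℝ) : enrm (u + v) ≤ enrm u + enrm v := by
  simp only [enrm, WithLp.equiv_symm_apply, WithLp.toLp_add]
  exact norm_add_le _ _

lemma enrm_mulVec_bound {n : ℕ} (M : Matrix (Fin n) (Fin n) ℝ) (η : ℝ)
    (hMnorm : wnorm 1 1 M ≤ η) (v : Fin n → ℝ) :
    enrm (M *ᵥ v) ≤ η * enrm v := by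
  have hη : 0 ≤ η := by
    refine le_trans ?_ hMnorm
    apply Real.sSup_nonneg
    rintro r ⟨w, hw, rfl⟩
    have : ∀ u : Fin n → ℝ, 0 ≤ vnorm 1 u := fun u => Real.sqrt_nonneg _
    exact div_nonneg (this _) (this _)
  have hv1 : ∀ u : Fin n → ℝ, vnorm 1 u = enrm u := by
    intro u; rw [vnorm, one_mulVec, enrm_eq]
  rcases eq_or_ne v 0 with rfl | hv
  · simp [enrm, mulVec_zero]
  · have hvpos := enrm_pos hv
    have hbdd : BddAbove {r : ℝ | ∃ w : Fin n → ℝ, w ≠ 0 ∧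
        r = vnorm 1 (M *ᵥ w) / vnorm 1 w} := by
      set f := LinearMap.toContinuousLinearMap (Matrix.toEuclideanLin M) with hf
      refine ⟨‖f‖, ?_⟩
      rintro r ⟨w, hw, rfl⟩
      rw [hv1, hv1, div_le_iff₀ (enrm_pos hw)]
      have : enrm (M *ᵥ w) = ‖f ((WithLp.equiv 2 (Fin n → ℝ)).symm w)‖ := rfl
      rw [this]
      exact f.le_opNorm _
    have hmem : vnorm 1 (M *ᵥ v) / vnorm 1 v ∈ {r : ℝ | ∃ w : Fin n → ℝ, w ≠ 0 ∧
        r = vnorm 1 (M *ᵥ w) / vnorm 1 w} := ⟨v, hv, rfl⟩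
    have := le_trans (le_csSup hbdd hmem) hMnorm
    rw [hv1, hv1, div_le_iff₀ hvpos] at this
    exact this


theorem stmt_3 {n : ℕ} (M : Matrix (Fin n) (Fin n) ℝ) (η : ℝ)
    (hM : Mᵀ = -M) (hMnorm : wnorm 1 1 M ≤ η) :
    IsUnit (1 + M).det ∧
    ∀ y : Fin n → ℝ, y ≠ 0 → (y ⬝ᵥ y) / (1 + η) ^ 2 ≤ y ⬝ᵥ ((1 + M)⁻¹ *ᵥ y) := by
  have hη : 0 ≤ η := by
    refine le_trans ?_ hMnorm
    apply Real.sSup_nonneg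
    rintro r ⟨w, hw, rfl⟩
    exact div_nonneg (Real.sqrt_nonneg _) (Real.sqrt_nonneg _)
  have hskew : ∀ x : Fin n → ℝ, x ⬝ᵥ (M *ᵥ x) = 0 := by
    intro x
    have h1 : x ⬝ᵥ (M *ᵥ x) = (Mᵀ *ᵥ x) ⬝ᵥ x := by
      rw [Matrix.dotProduct_mulVec, ← Matrix.vecMul_transpose]
      rw [transpose_transpose]
    rw [hM, neg_mulVec, neg_dotProduct, dotProduct_comm] at h1
    have h2 : M *ᵥ x ⬝ᵥ x = 0 := by linarith
    rw [dotProduct_comm]; exact h2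
  have hker : ∀ x : Fin n → ℝ, (1 + M) *ᵥ x = 0 → x = 0 := by
    intro x hx
    have h2 : x ⬝ᵥ ((1 + M) *ᵥ x) = 0 := by rw [hx, dotProduct_zero]
    rw [add_mulVec, one_mulVec, dotProduct_add, hskew, add_zero, dot_self_eq] at h2
    have := enrm_nonneg x
    have hx0 : enrm x = 0 := by nlinarith
    by_contra hne
    exact absurd hx0 (ne_of_gt (enrm_pos hne))
  have hdet : IsUnit (1 + M).det := by
    rw [isUnit_iff_ne_zero]
    intro h0
    obtain ⟨v, hv, hv0⟩ := (Matrix.exists_mulVec_eq_zero_iff).mpr h0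
    exact hv (hker v hv0)
  refine ⟨hdet, fun y hy => ?_⟩
  set x := (1 + M)⁻¹ *ᵥ y with hxdef
  have hyx : (1 + M) *ᵥ x = y := by
    rw [hxdef, Matrix.mulVec_mulVec, Matrix.mul_nonsing_inv _ hdet, one_mulVec]
  have hdot : y ⬝ᵥ x = x ⬝ᵥ x := by
    rw [← hyx, add_mulVec, one_mulVec, add_dotProduct, dotProduct_comm (M *ᵥ x) x,
      hskew, add_zero]
  have hbound : enrm y ≤ (1 + η) * enrm x := by
    rw [← hyx, add_mulVec, one_mulVec]
    calc enrm (x + M *ᵥ x) ≤ enrm x + enrm (M *ᵥ x) := enrm_add_le _ _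
      _ ≤ enrm x + η * enrm x := by linarith [enrm_mulVec_bound M η hMnorm x]
      _ = (1 + η) * enrm x := by ring
  have h1η : (0:ℝ) < (1 + η) ^ 2 := by positivity
  rw [div_le_iff₀ h1η, hdot, dot_self_eq, dot_self_eq]
  calc enrm y ^ 2 ≤ ((1 + η) * enrm x) ^ 2 := by
        apply pow_le_pow_left₀ (enrm_nonneg _) hbound
      _ = enrm x ^ 2 * (1 + η) ^ 2 := by ring
end

section
/- In the saddle-point setting, the Schur complement S = B F⁻¹ Bᵀ is nonsingular and ‖S⁻¹‖_{H2⁻¹,H2} ≤ (1 + η)² / C₂². -/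
open Matrix

open Matrix

section Aux

variable {α β : Type*} [Fintype α] [Fintype β]

lemma dot_transpose (A : Matrix β α ℝ) (x : α → ℝ) (y : β → ℝ) :
    x ⬝ᵥ (Aᵀ *ᵥ y) = y ⬝ᵥ (A *ᵥ x) := by
  rw [Matrix.dotProduct_mulVec, Matrix.vecMul_transpose, dotProduct_comm]

lemma psd_cauchy_schwarz (H : Matrix α α ℝ) (hs : Hᵀ = H)
    (hpsd : ∀ x, 0 ≤ x ⬝ᵥ (H *ᵥ x)) (a b : α → ℝ) :
    (a ⬝ᵥ (H *ᵥ b)) ^ 2 ≤ (a ⬝ᵥ (H *ᵥ a)) * (b ⬝ᵥ (H *ᵥ b)) := by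
  have hsym : b ⬝ᵥ (H *ᵥ a) = a ⬝ᵥ (H *ᵥ b) := by
    conv_lhs => rw [← hs]
    rw [dot_transpose]
  have h : ∀ t : ℝ, 0 ≤ (b ⬝ᵥ (H *ᵥ b)) * (t * t) + (2 * (a ⬝ᵥ (H *ᵥ b))) * t
      + (a ⬝ᵥ (H *ᵥ a)) := by
    intro t
    have hq := hpsd (a + t • b)
    simp only [mulVec_add, mulVec_smul, dotProduct_add, add_dotProduct,
      dotProduct_smul, smul_dotProduct, smul_eq_mul] at hq
    rw [hsym] at hq
    nlinarith [hq]
  have := discrim_le_zero h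
  rw [discrim] at this
  nlinarith [this]

lemma vnorm_nonneg (H : Matrix α α ℝ) (u : α → ℝ) : 0 ≤ vnorm H u := Real.sqrt_nonneg _

lemma vnorm_sq (H : Matrix α α ℝ) (hpsd : ∀ x, 0 ≤ x ⬝ᵥ (H *ᵥ x)) (u : α → ℝ) :
    vnorm H u ^ 2 = u ⬝ᵥ (H *ᵥ u) := Real.sq_sqrt (hpsd u)

lemma vnorm_triangle (H : Matrix α α ℝ) (hs : Hᵀ = H)
    (hpsd : ∀ x, 0 ≤ x ⬝ᵥ (H *ᵥ x)) (a b : α → ℝ) :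
    vnorm H (a + b) ≤ vnorm H a + vnorm H b := by
  have hcs := psd_cauchy_schwarz H hs hpsd a b
  have ha := hpsd a
  have hb := hpsd b
  have hab : a ⬝ᵥ (H *ᵥ b) ≤ vnorm H a * vnorm H b := by
    have h1 : a ⬝ᵥ (H *ᵥ b) ≤ |a ⬝ᵥ (H *ᵥ b)| := le_abs_self _
    have h2 : |a ⬝ᵥ (H *ᵥ b)| = Real.sqrt ((a ⬝ᵥ (H *ᵥ b)) ^ 2) := (Real.sqrt_sq_eq_abs _).symm
    have h3 : Real.sqrt ((a ⬝ᵥ (H *ᵥ b)) ^ 2) ≤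
        Real.sqrt ((a ⬝ᵥ (H *ᵥ a)) * (b ⬝ᵥ (H *ᵥ b))) := Real.sqrt_le_sqrt hcs
    rw [Real.sqrt_mul ha] at h3
    unfold vnorm
    linarith
  have hsym : b ⬝ᵥ (H *ᵥ a) = a ⬝ᵥ (H *ᵥ b) := by
    conv_lhs => rw [← hs]; rw [dot_transpose]
  unfold vnorm
  have hexp : (a + b) ⬝ᵥ (H *ᵥ (a + b)) =
      a ⬝ᵥ (H *ᵥ a) + 2 * (a ⬝ᵥ (H *ᵥ b)) + b ⬝ᵥ (H *ᵥ b) := by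
    simp only [mulVec_add, dotProduct_add, add_dotProduct]
    linarith [hsym]
  rw [hexp]
  have hle : a ⬝ᵥ (H *ᵥ a) + 2 * (a ⬝ᵥ (H *ᵥ b)) + b ⬝ᵥ (H *ᵥ b) ≤
      (Real.sqrt (a ⬝ᵥ (H *ᵥ a)) + Real.sqrt (b ⬝ᵥ (H *ᵥ b))) ^ 2 := by
    have e1 : Real.sqrt (a ⬝ᵥ (H *ᵥ a)) ^ 2 = a ⬝ᵥ (H *ᵥ a) := Real.sq_sqrt ha
    have e2 : Real.sqrt (b ⬝ᵥ (H *ᵥ b)) ^ 2 = b ⬝ᵥ (H *ᵥ b) := Real.sq_sqrt hb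
    unfold vnorm at hab
    nlinarith [hab]
  calc Real.sqrt (a ⬝ᵥ (H *ᵥ a) + 2 * (a ⬝ᵥ (H *ᵥ b)) + b ⬝ᵥ (H *ᵥ b))
      ≤ Real.sqrt ((Real.sqrt (a ⬝ᵥ (H *ᵥ a)) + Real.sqrt (b ⬝ᵥ (H *ᵥ b))) ^ 2) :=
        Real.sqrt_le_sqrt hle
    _ = Real.sqrt (a ⬝ᵥ (H *ᵥ a)) + Real.sqrt (b ⬝ᵥ (H *ᵥ b)) := by
        rw [Real.sqrt_sq (by positivity)]

lemma posdef_dot_pos {H : Matrix α α ℝ} (h : H.PosDef) {x : α → ℝ} (hx : x ≠ 0) :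
    0 < x ⬝ᵥ (H *ᵥ x) := by
  have := h.dotProduct_mulVec_pos hx
  simpa using this

lemma posdef_dot_nonneg {H : Matrix α α ℝ} (h : H.PosSemidef) (x : α → ℝ) :
    0 ≤ x ⬝ᵥ (H *ᵥ x) := by
  have := h.dotProduct_mulVec_nonneg x
  simpa using this

lemma posdef_transpose_eq {H : Matrix α α ℝ} (h : H.IsHermitian) : Hᵀ = H := by
  have := h
  rwa [Matrix.IsHermitian, Matrix.conjTranspose_eq_transpose_of_trivial] at this

lemma vnorm_pos {H : Matrix α α ℝ} (h : H.PosDef) {x : α → ℝ} (hx : x ≠ 0) :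
    0 < vnorm H x := Real.sqrt_pos.mpr (posdef_dot_pos h hx)

/-- pairing Cauchy–Schwarz: `a ⬝ v ≤ ‖a‖_H ‖v‖_{H⁻¹}`. -/
lemma pairing_cs [DecidableEq α] {H : Matrix α α ℝ} (h : H.PosDef) (a v : α → ℝ) :
    a ⬝ᵥ v ≤ vnorm H a * vnorm H⁻¹ v := by
  have hdet : IsUnit H.det := isUnit_iff_ne_zero.mpr (ne_of_gt h.det_pos)
  have hs : Hᵀ = H := posdef_transpose_eq h.isHermitian
  have hHb : H *ᵥ (H⁻¹ *ᵥ v) = v := by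
    rw [mulVec_mulVec, Matrix.mul_nonsing_inv _ hdet, one_mulVec]
  have hcs := psd_cauchy_schwarz H hs (posdef_dot_nonneg h.posSemidef) a (H⁻¹ *ᵥ v)
  rw [hHb, dotProduct_comm (H⁻¹ *ᵥ v) v] at hcs
  have h1 : a ⬝ᵥ v ≤ |a ⬝ᵥ v| := le_abs_self _
  have h2 : |a ⬝ᵥ v| = Real.sqrt ((a ⬝ᵥ v) ^ 2) := (Real.sqrt_sq_eq_abs _).symm
  have h3 : Real.sqrt ((a ⬝ᵥ v) ^ 2) ≤
      Real.sqrt ((a ⬝ᵥ (H *ᵥ a)) * (v ⬝ᵥ (H⁻¹ *ᵥ v))) := Real.sqrt_le_sqrt hcs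
  rw [Real.sqrt_mul (posdef_dot_nonneg h.posSemidef a)] at h3
  unfold vnorm
  linarith

/-- Frobenius bound. -/
lemma frob_bound (D : Matrix β α ℝ) (y : α → ℝ) :
    (D *ᵥ y) ⬝ᵥ (D *ᵥ y) ≤ (∑ i, ∑ j, D i j ^ 2) * (y ⬝ᵥ y) := by
  have h1 : (D *ᵥ y) ⬝ᵥ (D *ᵥ y) = ∑ i, (∑ j, D i j * y j) ^ 2 := by
    simp [dotProduct, mulVec, sq]
  have h2 : y ⬝ᵥ y = ∑ j, y j ^ 2 := by simp [dotProduct, sq]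
  rw [h1, h2]
  calc ∑ i, (∑ j, D i j * y j) ^ 2
      ≤ ∑ i, (∑ j, D i j ^ 2) * (∑ j, y j ^ 2) := by
        apply Finset.sum_le_sum
        intro i _
        exact Finset.sum_mul_sq_le_sq_mul_sq _ _ _
    _ = (∑ i, ∑ j, D i j ^ 2) * ∑ j, y j ^ 2 := by rw [Finset.sum_mul]

/-- the ratio set is bounded above. -/
lemma ratio_bddAbove [DecidableEq α] (H1 : Matrix α α ℝ) (H2 : Matrix β β ℝ)
    (M : Matrix β α ℝ) (h1 : H1.PosDef) (h2 : H2.PosSemidef) :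
    BddAbove {r : ℝ | ∃ v : α → ℝ, v ≠ 0 ∧ r = vnorm H2 (M *ᵥ v) / vnorm H1 v} := by
  classical
  open scoped MatrixOrder in
  obtain ⟨A1, hA1⟩ := CStarAlgebra.nonneg_iff_eq_star_mul_self.mp h1.posSemidef.nonneg
  open scoped MatrixOrder in
  obtain ⟨A2, hA2⟩ := CStarAlgebra.nonneg_iff_eq_star_mul_self.mp h2.nonneg
  rw [Matrix.star_eq_conjTranspose, Matrix.conjTranspose_eq_transpose_of_trivial] at hA1 hA2
  have hA1det : IsUnit A1.det := by
    have hd := h1.det_pos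
    rw [hA1, Matrix.det_mul, Matrix.det_transpose] at hd
    exact isUnit_iff_ne_zero.mpr (fun h => by simp [h] at hd)
  set K1 : ℝ := Real.sqrt (∑ i, ∑ j, (A2 * M) i j ^ 2) with hK1
  set K2 : ℝ := Real.sqrt (∑ i, ∑ j, (A1⁻¹) i j ^ 2) with hK2
  refine ⟨K1 * K2, ?_⟩
  rintro r ⟨v, hv, rfl⟩
  have hvpos := vnorm_pos h1 hv
  rw [div_le_iff₀ hvpos]
  -- vnorm H2 (M v) ≤ K1 * sqrt (v ⬝ v)
  have e1 : (M *ᵥ v) ⬝ᵥ (H2 *ᵥ (M *ᵥ v)) = ((A2 * M) *ᵥ v) ⬝ᵥ ((A2 * M) *ᵥ v) := by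
    rw [hA2, ← mulVec_mulVec, dot_transpose, ← mulVec_mulVec, mulVec_mulVec]
  have b1 : vnorm H2 (M *ᵥ v) ≤ K1 * Real.sqrt (v ⬝ᵥ v) := by
    unfold vnorm
    rw [e1, hK1, ← Real.sqrt_mul (by positivity)]
    exact Real.sqrt_le_sqrt (frob_bound _ _)
  -- sqrt (v ⬝ v) ≤ K2 * vnorm H1 v
  have hvrec : A1⁻¹ *ᵥ (A1 *ᵥ v) = v := by
    rw [mulVec_mulVec, Matrix.nonsing_inv_mul _ hA1det, one_mulVec]
  have e2 : v ⬝ᵥ (H1 *ᵥ v) = (A1 *ᵥ v) ⬝ᵥ (A1 *ᵥ v) := by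
    rw [hA1, ← mulVec_mulVec, dot_transpose]
  have b2 : Real.sqrt (v ⬝ᵥ v) ≤ K2 * vnorm H1 v := by
    unfold vnorm
    rw [e2, hK2, ← Real.sqrt_mul (by positivity)]
    conv_lhs => rw [← hvrec]
    exact Real.sqrt_le_sqrt (frob_bound _ _)
  calc vnorm H2 (M *ᵥ v) ≤ K1 * Real.sqrt (v ⬝ᵥ v) := b1
    _ ≤ K1 * (K2 * vnorm H1 v) := by
        apply mul_le_mul_of_nonneg_left b2 (by positivity)
    _ = K1 * K2 * vnorm H1 v := by ring

/-- extraction of per-vector bound from `wnorm` bound. -/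
lemma wnorm_extract [DecidableEq α] {H1 : Matrix α α ℝ} {H2 : Matrix β β ℝ}
    {M : Matrix β α ℝ} (h1 : H1.PosDef) (h2 : H2.PosSemidef) {c : ℝ}
    (hb : wnorm H1 H2 M ≤ c) (v : α → ℝ) :
    vnorm H2 (M *ᵥ v) ≤ c * vnorm H1 v := by
  by_cases hv : v = 0
  · subst hv
    simp only [mulVec_zero]
    unfold vnorm
    simp
  · have hbdd := ratio_bddAbove H1 H2 M h1 h2
    have hmem : vnorm H2 (M *ᵥ v) / vnorm H1 v ∈
        {r : ℝ | ∃ v : α → ℝ, v ≠ 0 ∧ r = vnorm H2 (M *ᵥ v) / vnorm H1 v} := ⟨v, hv, rfl⟩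
    have := le_csSup hbdd hmem
    have hle : vnorm H2 (M *ᵥ v) / vnorm H1 v ≤ c := le_trans this hb
    have hvpos := vnorm_pos h1 hv
    rw [div_le_iff₀ hvpos] at hle
    exact hle

end Aux
theorem stmt_4
    {n m : ℕ} (F : Matrix (Fin n) (Fin n) ℝ) (B : Matrix (Fin m) (Fin n) ℝ)
    (H1 N : Matrix (Fin n) (Fin n) ℝ) (H2 : Matrix (Fin m) (Fin m) ℝ)
    (η C₁ C₂ : ℝ) (hη : 0 < η) (hC1 : 0 < C₁) (hC2 : 0 < C₂)
    (hH1 : H1 = ((1 : ℝ)/2) • (F + Fᵀ)) (hN : N = ((1 : ℝ)/2) • (F - Fᵀ))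
    (hH1pd : H1.PosDef) (hH2pd : H2.PosDef)
    (hBrank : B.rank = m)
    (hNnorm : wnorm H1 H1⁻¹ N ≤ η)
    (hBnorm : wnorm H1 H2⁻¹ B ≤ C₁)
    (hinfsup : ∀ x : Fin m → ℝ, x ≠ 0 → C₂ * vnorm H2 x ≤ vnorm H1⁻¹ (Bᵀ *ᵥ x)) :
    IsUnit (B * F⁻¹ * Bᵀ).det ∧
    wnorm H2⁻¹ H2 (B * F⁻¹ * Bᵀ)⁻¹ ≤ (1 + η) ^ 2 / C₂ ^ 2 := by
  set S := B * F⁻¹ * Bᵀ with hS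
  -- F has positive-definite quadratic form: x ⬝ F x = x ⬝ H1 x
  have hsymF : ∀ z : Fin n → ℝ, z ⬝ᵥ (F *ᵥ z) = z ⬝ᵥ (H1 *ᵥ z) := by
    intro z
    have ht : z ⬝ᵥ (Fᵀ *ᵥ z) = z ⬝ᵥ (F *ᵥ z) := dot_transpose F z z
    rw [hH1]
    simp only [smul_mulVec, add_mulVec, dotProduct_smul, dotProduct_add, smul_eq_mul]
    rw [ht]; ring
  -- F is invertible
  have hFdet : IsUnit F.det := by
    rw [isUnit_iff_ne_zero]
    intro h0
    obtain ⟨v, hv, hFv⟩ := (Matrix.exists_mulVec_eq_zero_iff).mpr h0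
    have := posdef_dot_pos hH1pd hv
    rw [← hsymF, hFv, dotProduct_zero] at this
    exact lt_irrefl _ this
  -- H1⁻¹ facts
  have hH1i : (H1⁻¹).PosDef := hH1pd.inv
  have hH1is : (H1⁻¹)ᵀ = H1⁻¹ := posdef_transpose_eq hH1i.isHermitian
  have hH1ipsd := posdef_dot_nonneg hH1i.posSemidef
  have hH1dets : IsUnit H1.det := isUnit_iff_ne_zero.mpr (ne_of_gt hH1pd.det_pos)
  -- F = H1 + N
  have hFHN : H1 + N = F := by
    rw [hH1, hN]
    ext i j
    simp [Matrix.add_apply, Matrix.smul_apply, Matrix.sub_apply, smul_eq_mul]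
    ring
  -- key lower bound on the quadratic form of S
  have hkey : ∀ x : Fin m → ℝ, x ≠ 0 →
      C₂ ^ 2 * (vnorm H2 x) ^ 2 ≤ (1 + η) ^ 2 * (x ⬝ᵥ (S *ᵥ x)) ∧
        0 < x ⬝ᵥ (S *ᵥ x) := by
    intro x hx
    obtain ⟨u, hu⟩ : ∃ u : Fin n → ℝ, u = Bᵀ *ᵥ x := ⟨_, rfl⟩
    obtain ⟨w, hw⟩ : ∃ w : Fin n → ℝ, w = F⁻¹ *ᵥ u := ⟨_, rfl⟩
    have hFw : F *ᵥ w = u := by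
      rw [hw, mulVec_mulVec, Matrix.mul_nonsing_inv _ hFdet, one_mulVec]
    have hu0 : u ≠ 0 := by
      intro h0
      have h1 := hinfsup x hx
      rw [← hu, h0] at h1
      have h2 : vnorm H1⁻¹ (0 : Fin n → ℝ) = 0 := by unfold vnorm; simp
      have h3 := vnorm_pos hH2pd hx
      rw [h2] at h1
      nlinarith
    have hw0 : w ≠ 0 := by
      intro h0
      rw [h0, mulVec_zero] at hFw
      exact hu0 hFw.symm
    -- x ⬝ S x = w ⬝ H1 w
    have hq : x ⬝ᵥ (S *ᵥ x) = w ⬝ᵥ (H1 *ᵥ w) := by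
      have h1 : S *ᵥ x = B *ᵥ w := by
        rw [hS, ← mulVec_mulVec, ← mulVec_mulVec, ← hu, ← hw]
      rw [h1]
      have h2 : x ⬝ᵥ (B *ᵥ w) = w ⬝ᵥ (Bᵀ *ᵥ x) := by
        conv_lhs => rw [show B = (Bᵀ)ᵀ by simp]
        rw [dot_transpose]
      rw [h2, ← hu, ← hFw, hsymF w]
    have hqpos : 0 < x ⬝ᵥ (S *ᵥ x) := by
      rw [hq]; exact posdef_dot_pos hH1pd hw0
    refine ⟨?_, hqpos⟩
    -- ‖u‖_{H1⁻¹} ≤ (1+η) ‖w‖_{H1}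
    have hsplit : u = H1 *ᵥ w + N *ᵥ w := by
      rw [← hFw, ← hFHN, add_mulVec]
    have htri : vnorm H1⁻¹ u ≤ vnorm H1⁻¹ (H1 *ᵥ w) + vnorm H1⁻¹ (N *ᵥ w) := by
      rw [hsplit]
      exact vnorm_triangle H1⁻¹ hH1is hH1ipsd _ _
    have hterm1 : vnorm H1⁻¹ (H1 *ᵥ w) = vnorm H1 w := by
      have hrec : H1⁻¹ *ᵥ (H1 *ᵥ w) = w := by
        rw [mulVec_mulVec, Matrix.nonsing_inv_mul _ hH1dets, one_mulVec]
      unfold vnorm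
      rw [hrec, dotProduct_comm]
    have hterm2 : vnorm H1⁻¹ (N *ᵥ w) ≤ η * vnorm H1 w :=
      wnorm_extract hH1pd hH1i.posSemidef hNnorm w
    have hlow := hinfsup x hx
    rw [← hu] at hlow
    have hchain : C₂ * vnorm H2 x ≤ (1 + η) * vnorm H1 w := by
      rw [hterm1] at htri
      calc C₂ * vnorm H2 x ≤ vnorm H1⁻¹ u := hlow
        _ ≤ vnorm H1 w + vnorm H1⁻¹ (N *ᵥ w) := htri
        _ ≤ vnorm H1 w + η * vnorm H1 w := by linarith
        _ = (1 + η) * vnorm H1 w := by ring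
    have hsqw : (vnorm H1 w) ^ 2 = w ⬝ᵥ (H1 *ᵥ w) :=
      vnorm_sq H1 (posdef_dot_nonneg hH1pd.posSemidef) w
    have h2x := vnorm_nonneg H2 x
    have hwn := vnorm_nonneg H1 w
    nlinarith [hchain, hsqw, hq, mul_nonneg hC2.le h2x]
  -- S is invertible
  have hSdet : IsUnit S.det := by
    rw [isUnit_iff_ne_zero]
    intro h0
    obtain ⟨v, hv, hSv⟩ := (Matrix.exists_mulVec_eq_zero_iff).mpr h0
    have := (hkey v hv).2
    rw [hSv, dotProduct_zero] at this
    exact lt_irrefl _ this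
  refine ⟨hSdet, ?_⟩
  -- the operator norm bound
  have hH2i : (H2⁻¹).PosDef := hH2pd.inv
  have hcnn : (0 : ℝ) ≤ (1 + η) ^ 2 / C₂ ^ 2 := by positivity
  apply Real.sSup_le _ hcnn
  rintro r ⟨v, hv, rfl⟩
  set x : Fin m → ℝ := S⁻¹ *ᵥ v with hx
  have hSx : S *ᵥ x = v := by
    rw [hx, mulVec_mulVec, Matrix.mul_nonsing_inv _ hSdet, one_mulVec]
  have hden := vnorm_pos hH2i hv
  by_cases hx0 : x = 0
  · rw [hx0]
    have : vnorm H2 (0 : Fin m → ℝ) = 0 := by unfold vnorm; simp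
    rw [this, zero_div]
    positivity
  · have hk := (hkey x hx0).1
    have hpair : x ⬝ᵥ v ≤ vnorm H2 x * vnorm H2⁻¹ v := pairing_cs hH2pd x v
    have hqv : x ⬝ᵥ (S *ᵥ x) = x ⬝ᵥ v := by rw [hSx]
    rw [hqv] at hk
    have hxpos := vnorm_pos hH2pd hx0
    rw [div_le_iff₀ hden]
    -- C₂² ‖x‖² ≤ (1+η)² ‖x‖ ‖v‖  ⇒ ‖x‖ ≤ (1+η)²/C₂² ‖v‖
    have hC2sq : (0 : ℝ) < C₂ ^ 2 := by positivity
    rw [div_mul_eq_mul_div, le_div_iff₀ hC2sq]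
    nlinarith [hk, hpair, hxpos, hden, vnorm_nonneg H2⁻¹ v, sq_nonneg (1 + η)]
end

section
/- In the saddle-point setting, with M_U = [[F, Bᵀ],[0, H2]] and H = blockdiag(H1, H2), if η < 1/2 then ‖H(M_U⁻¹K) − (M_U⁻¹K)ᵀH‖_{H,H⁻¹} ≤ (2C₁² + 4C₁) η. -/
open Matrix

namespace AuxSP

variable {α β : Type*} [Fintype α] [Fintype β] [DecidableEq α] [DecidableEq β]

set_option linter.unusedSectionVars false

/-- Euclidean norm via dot product. -/
noncomputable def en (v : α → ℝ) : ℝ := Real.sqrt (v ⬝ᵥ v)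

lemma dp_self_nonneg (v : α → ℝ) : 0 ≤ v ⬝ᵥ v :=
  Finset.sum_nonneg fun _ _ => mul_self_nonneg _

lemma dp_self_eq_sum_sq (v : α → ℝ) : v ⬝ᵥ v = ∑ i, v i ^ 2 := by
  simp [dotProduct, sq]

lemma en_nonneg (v : α → ℝ) : 0 ≤ en v := Real.sqrt_nonneg _

lemma en_sq (v : α → ℝ) : en v ^ 2 = v ⬝ᵥ v :=
  Real.sq_sqrt (dp_self_nonneg v)

lemma en_zero : en (0 : α → ℝ) = 0 := by simp [en]

lemma en_neg (v : α → ℝ) : en (-v) = en v := by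
  simp [en, neg_dotProduct, dotProduct_neg]

lemma en_pos {v : α → ℝ} (hv : v ≠ 0) : 0 < en v := by
  apply Real.sqrt_pos.2
  rcases Function.ne_iff.1 hv with ⟨i, hi⟩
  exact Finset.sum_pos' (fun j _ => mul_self_nonneg _)
    ⟨i, Finset.mem_univ i, mul_self_pos.2 (by simpa using hi)⟩

lemma dp_le_en_mul (v w : α → ℝ) : v ⬝ᵥ w ≤ en v * en w := by
  have h := Finset.sum_mul_sq_le_sq_mul_sq Finset.univ v w
  have h2 : v ⬝ᵥ w ≤ |v ⬝ᵥ w| := le_abs_self _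
  have h3 : |v ⬝ᵥ w| = Real.sqrt ((v ⬝ᵥ w) ^ 2) := (Real.sqrt_sq_eq_abs _).symm
  have h4 : Real.sqrt ((v ⬝ᵥ w) ^ 2) ≤ Real.sqrt ((∑ i, v i ^ 2) * ∑ i, w i ^ 2) := by
    apply Real.sqrt_le_sqrt
    simpa [dotProduct] using h
  calc v ⬝ᵥ w ≤ Real.sqrt ((v ⬝ᵥ w) ^ 2) := h3 ▸ h2
    _ ≤ Real.sqrt ((∑ i, v i ^ 2) * ∑ i, w i ^ 2) := h4
    _ = en v * en w := by
        rw [Real.sqrt_mul (Finset.sum_nonneg fun i _ => sq_nonneg _)]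
        simp [en, dp_self_eq_sum_sq]

lemma en_add_le (v w : α → ℝ) : en (v + w) ≤ en v + en w := by
  have hexp : (v + w) ⬝ᵥ (v + w) = v ⬝ᵥ v + 2 * (v ⬝ᵥ w) + w ⬝ᵥ w := by
    simp [add_dotProduct, dotProduct_add, dotProduct_comm w v]; ring
  have h1 : (v + w) ⬝ᵥ (v + w) ≤ (en v + en w) ^ 2 := by
    rw [hexp]
    have := dp_le_en_mul v w
    have h2 := en_sq v; have h3 := en_sq w
    nlinarith
  calc en (v + w) = Real.sqrt ((v + w) ⬝ᵥ (v + w)) := rfl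
    _ ≤ Real.sqrt ((en v + en w) ^ 2) := Real.sqrt_le_sqrt h1
    _ = en v + en w := Real.sqrt_sq (add_nonneg (en_nonneg v) (en_nonneg w))

/-- every matrix is bounded as an operator in the euclidean norm -/
lemma exists_bound (M : Matrix β α ℝ) : ∃ K : ℝ, 0 ≤ K ∧ ∀ v, en (M *ᵥ v) ≤ K * en v := by
  refine ⟨Real.sqrt (∑ i, ∑ j, M i j ^ 2), Real.sqrt_nonneg _, fun v => ?_⟩
  have hstep : ∀ i, (M *ᵥ v) i ^ 2 ≤ (∑ j, M i j ^ 2) * ∑ j, v j ^ 2 := by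
    intro i
    simpa [mulVec, dotProduct] using Finset.sum_mul_sq_le_sq_mul_sq Finset.univ (fun j => M i j) v
  have h1 : (M *ᵥ v) ⬝ᵥ (M *ᵥ v) ≤ (∑ i, ∑ j, M i j ^ 2) * ∑ j, v j ^ 2 := by
    rw [dp_self_eq_sum_sq, Finset.sum_mul]
    exact Finset.sum_le_sum fun i _ => hstep i
  calc en (M *ᵥ v) = Real.sqrt ((M *ᵥ v) ⬝ᵥ (M *ᵥ v)) := rfl
    _ ≤ Real.sqrt ((∑ i, ∑ j, M i j ^ 2) * ∑ j, v j ^ 2) := Real.sqrt_le_sqrt h1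
    _ = Real.sqrt (∑ i, ∑ j, M i j ^ 2) * en v := by
        rw [Real.sqrt_mul (x := ∑ i, ∑ j, M i j ^ 2) (Finset.sum_nonneg fun i _ => Finset.sum_nonneg fun j _ => sq_nonneg _)]
        simp [en, dp_self_eq_sum_sq]

lemma dp_factor {R : Matrix α α ℝ} {P : Matrix α α ℝ} (hR : Rᵀ * R = P) (x : α → ℝ) :
    x ⬝ᵥ (P *ᵥ x) = (R *ᵥ x) ⬝ᵥ (R *ᵥ x) := by
  rw [← hR, ← mulVec_mulVec, dotProduct_mulVec, ← mulVec_transpose, transpose_transpose]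

lemma vnorm_factor {R : Matrix α α ℝ} {P : Matrix α α ℝ} (hR : Rᵀ * R = P) (x : α → ℝ) :
    vnorm P x = en (R *ᵥ x) := by
  rw [vnorm, dp_factor hR x]; rfl

lemma vnorm_pos {R P : Matrix α α ℝ} (hR : Rᵀ * R = P) (hdet : IsUnit R.det)
    {v : α → ℝ} (hv : v ≠ 0) : 0 < vnorm P v := by
  rw [vnorm_factor hR]
  apply en_pos
  intro h
  apply hv
  have : R⁻¹ *ᵥ (R *ᵥ v) = v := by
    rw [mulVec_mulVec, nonsing_inv_mul _ hdet, one_mulVec]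
  rw [← this, h, mulVec_zero]

lemma wnorm_le_of_forall {Ha : Matrix α α ℝ} {Hb : Matrix β β ℝ} {M : Matrix β α ℝ} {c : ℝ}
    (hc : 0 ≤ c) {Ra : Matrix α α ℝ} (hRa : Raᵀ * Ra = Ha) (hdet : IsUnit Ra.det)
    (h : ∀ v, vnorm Hb (M *ᵥ v) ≤ c * vnorm Ha v) : wnorm Ha Hb M ≤ c := by
  apply Real.sSup_le _ hc
  rintro r ⟨v, hv, rfl⟩
  rw [div_le_iff₀ (vnorm_pos hRa hdet hv)]
  exact h v

lemma forall_of_wnorm_le {Ha : Matrix α α ℝ} {Hb : Matrix β β ℝ} {M : Matrix β α ℝ} {c : ℝ}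
    {Ra : Matrix α α ℝ} {Rb : Matrix β β ℝ} (hRa : Raᵀ * Ra = Ha) (hRb : Rbᵀ * Rb = Hb)
    (hdet : IsUnit Ra.det) (hw : wnorm Ha Hb M ≤ c) :
    ∀ v, vnorm Hb (M *ᵥ v) ≤ c * vnorm Ha v := by
  intro v
  by_cases hv : v = 0
  · subst hv
    simp [vnorm, mulVec_zero, dotProduct_zero, zero_dotProduct, Real.sqrt_zero]
  · obtain ⟨K1, hK1n, hK1⟩ := exists_bound (Rb * M)
    obtain ⟨K2, hK2n, hK2⟩ := exists_bound (Ra⁻¹)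
    have hbdd : BddAbove {r : ℝ | ∃ v : α → ℝ, v ≠ 0 ∧ r = vnorm Hb (M *ᵥ v) / vnorm Ha v} := by
      refine ⟨K1 * K2, ?_⟩
      rintro r ⟨u, hu, rfl⟩
      rw [div_le_iff₀ (vnorm_pos hRa hdet hu)]
      have e1 : vnorm Hb (M *ᵥ u) = en ((Rb * M) *ᵥ u) := by
        rw [vnorm_factor hRb, mulVec_mulVec]
      have e2 : en u ≤ K2 * en (Ra *ᵥ u) := by
        have h3 : Ra⁻¹ *ᵥ (Ra *ᵥ u) = u := by
          rw [mulVec_mulVec, nonsing_inv_mul _ hdet, one_mulVec]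
        calc en u = en (Ra⁻¹ *ᵥ (Ra *ᵥ u)) := by rw [h3]
          _ ≤ K2 * en (Ra *ᵥ u) := hK2 _
      calc vnorm Hb (M *ᵥ u) = en ((Rb * M) *ᵥ u) := e1
        _ ≤ K1 * en u := hK1 u
        _ ≤ K1 * (K2 * en (Ra *ᵥ u)) := mul_le_mul_of_nonneg_left e2 hK1n
        _ = K1 * K2 * vnorm Ha u := by rw [vnorm_factor hRa]; ring
    have hmem : vnorm Hb (M *ᵥ v) / vnorm Ha v ∈
        {r : ℝ | ∃ v : α → ℝ, v ≠ 0 ∧ r = vnorm Hb (M *ᵥ v) / vnorm Ha v} := ⟨v, hv, rfl⟩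
    have hle := le_csSup hbdd hmem
    have h2 : vnorm Hb (M *ᵥ v) / vnorm Ha v ≤ c := le_trans hle hw
    rwa [div_le_iff₀ (vnorm_pos hRa hdet hv)] at h2

lemma fromBlocks_sub {l m o p : Type*} (A : Matrix l o ℝ) (B : Matrix l p ℝ)
    (C : Matrix m o ℝ) (D : Matrix m p ℝ) (A' : Matrix l o ℝ) (B' : Matrix l p ℝ)
    (C' : Matrix m o ℝ) (D' : Matrix m p ℝ) :
    fromBlocks A B C D - fromBlocks A' B' C' D'
      = fromBlocks (A - A') (B - B') (C - C') (D - D') := by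
  ext (i | i) (j | j) <;> simp [Matrix.sub_apply]

lemma inv_sandwich {a b : Type*} [Fintype a] [Fintype b] [DecidableEq a]
    (P : Matrix a a ℝ) (X : Matrix a b ℝ) (Q : Matrix b b ℝ) (h : IsUnit P.det) (v : b → ℝ) :
    P⁻¹ *ᵥ ((P * X * Q) *ᵥ v) = X *ᵥ (Q *ᵥ v) := by
  rw [mulVec_mulVec, ← Matrix.mul_assoc, ← Matrix.mul_assoc, nonsing_inv_mul _ h,
    Matrix.one_mul, ← mulVec_mulVec]

end AuxSP

set_option maxHeartbeats 1600000 in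
theorem stmt_10
    {n m : ℕ} (F : Matrix (Fin n) (Fin n) ℝ) (B : Matrix (Fin m) (Fin n) ℝ)
    (H1 N : Matrix (Fin n) (Fin n) ℝ) (H2 : Matrix (Fin m) (Fin m) ℝ)
    (η C₁ C₂ : ℝ) (hη : 0 < η) (hC1 : 0 < C₁) (hC2 : 0 < C₂)
    (hH1 : H1 = ((1 : ℝ)/2) • (F + Fᵀ)) (hN : N = ((1 : ℝ)/2) • (F - Fᵀ))
    (hH1pd : H1.PosDef) (hH2pd : H2.PosDef)
    (hBrank : B.rank = m)
    (hNnorm : wnorm H1 H1⁻¹ N ≤ η)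
    (hBnorm : wnorm H1 H2⁻¹ B ≤ C₁)
    (hinfsup : ∀ x : Fin m → ℝ, x ≠ 0 → C₂ * vnorm H2 x ≤ vnorm H1⁻¹ (Bᵀ *ᵥ x))
    (hsmall : η < 1/2)
    (K MU H : Matrix (Fin n ⊕ Fin m) (Fin n ⊕ Fin m) ℝ)
    (hK : K = fromBlocks F Bᵀ B 0)
    (hMU : MU = fromBlocks F Bᵀ 0 H2)
    (hH : H = fromBlocks H1 0 0 H2) :
    wnorm H H⁻¹ (H * (MU⁻¹ * K) - (MU⁻¹ * K)ᵀ * H) ≤ (2 * C₁ ^ 2 + 4 * C₁) * η := by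
  classical
  open AuxSP in
  have hNskew : Nᵀ = -N := by
    rw [hN]; ext i j
    simp [transpose_apply, Matrix.sub_apply, Matrix.smul_apply]; ring
  have hH1sym : H1ᵀ = H1 := hH1pd.1.eq
  have hH2sym : H2ᵀ = H2 := hH2pd.1.eq
  have hFsum : F = H1 + N := by
    rw [hH1, hN]; ext i j
    simp [Matrix.add_apply, Matrix.sub_apply, Matrix.smul_apply, transpose_apply]; ring
  obtain ⟨R1, hR1sq, hR1sym⟩ : ∃ R : Matrix (Fin n) (Fin n) ℝ, R * R = H1 ∧ Rᵀ = R := by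
    open scoped MatrixOrder in
    exact ⟨CFC.sqrt H1, CFC.sqrt_mul_sqrt_self H1 hH1pd.posSemidef.nonneg,
      (CFC.sqrt_nonneg H1).posSemidef.1.eq⟩
  obtain ⟨R2, hR2sq, hR2sym⟩ : ∃ R : Matrix (Fin m) (Fin m) ℝ, R * R = H2 ∧ Rᵀ = R := by
    open scoped MatrixOrder in
    exact ⟨CFC.sqrt H2, CFC.sqrt_mul_sqrt_self H2 hH2pd.posSemidef.nonneg,
      (CFC.sqrt_nonneg H2).posSemidef.1.eq⟩
  have hdR1 : IsUnit R1.det := by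
    have h : R1.det * R1.det = H1.det := by rw [← det_mul, hR1sq]
    have h2 := hH1pd.det_pos
    refine isUnit_iff_ne_zero.2 fun h0 => ?_
    rw [h0, mul_zero] at h; rw [← h] at h2; exact lt_irrefl _ h2
  have hdR2 : IsUnit R2.det := by
    have h : R2.det * R2.det = H2.det := by rw [← det_mul, hR2sq]
    have h2 := hH2pd.det_pos
    refine isUnit_iff_ne_zero.2 fun h0 => ?_
    rw [h0, mul_zero] at h; rw [← h] at h2; exact lt_irrefl _ h2
  have hdH1 : IsUnit H1.det := isUnit_iff_ne_zero.2 hH1pd.det_pos.ne'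
  have hdH2 : IsUnit H2.det := isUnit_iff_ne_zero.2 hH2pd.det_pos.ne'
  have hR1isym : R1⁻¹ᵀ = R1⁻¹ := by rw [transpose_nonsing_inv, hR1sym]
  have hR2isym : R2⁻¹ᵀ = R2⁻¹ := by rw [transpose_nonsing_inv, hR2sym]
  have hfacH1 : R1ᵀ * R1 = H1 := by rw [hR1sym]; exact hR1sq
  have hfacH2 : R2ᵀ * R2 = H2 := by rw [hR2sym]; exact hR2sq
  have hH1i : H1⁻¹ = R1⁻¹ * R1⁻¹ := by rw [← hR1sq, Matrix.mul_inv_rev]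
  have hH2i : H2⁻¹ = R2⁻¹ * R2⁻¹ := by rw [← hR2sq, Matrix.mul_inv_rev]
  have hfacH1i : R1⁻¹ᵀ * R1⁻¹ = H1⁻¹ := by rw [hR1isym, hH1i]
  have hfacH2i : R2⁻¹ᵀ * R2⁻¹ = H2⁻¹ := by rw [hR2isym, hH2i]
  -- tilde matrices
  set Nt := R1⁻¹ * N * R1⁻¹ with hNtdef
  set Bt := R2⁻¹ * B * R1⁻¹ with hBtdef
  set Ft := (1 : Matrix (Fin n) (Fin n) ℝ) + Nt with hFtdef
  set St := Btᵀ * Bt with hStdef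
  have hNtskew : Ntᵀ = -Nt := by
    rw [hNtdef, transpose_mul, transpose_mul, hNskew, hR1isym]
    simp [Matrix.mul_neg, Matrix.neg_mul, Matrix.mul_assoc]
  have skewdp : ∀ (S : Matrix (Fin n) (Fin n) ℝ), Sᵀ = -S → ∀ x : Fin n → ℝ,
      x ⬝ᵥ (S *ᵥ x) = 0 := by
    intro S hS x
    have h1 : x ⬝ᵥ (S *ᵥ x) = (Sᵀ *ᵥ x) ⬝ᵥ x := by
      rw [dotProduct_mulVec, ← mulVec_transpose]
    rw [hS, neg_mulVec, neg_dotProduct] at h1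
    have h2 : (S *ᵥ x) ⬝ᵥ x = x ⬝ᵥ (S *ᵥ x) := dotProduct_comm _ _
    rw [h2] at h1
    linarith
  have det1S : ∀ (S : Matrix (Fin n) (Fin n) ℝ), Sᵀ = -S →
      IsUnit ((1 : Matrix (Fin n) (Fin n) ℝ) + S).det := by
    intro S hS
    refine isUnit_iff_ne_zero.2 fun h0 => ?_
    obtain ⟨v, hv, hv0⟩ := (Matrix.exists_mulVec_eq_zero_iff).2 h0
    have h : v ⬝ᵥ (((1 : Matrix (Fin n) (Fin n) ℝ) + S) *ᵥ v) = 0 := by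
      rw [hv0, dotProduct_zero]
    rw [add_mulVec, one_mulVec, dotProduct_add, skewdp S hS v, add_zero] at h
    exact hv (dotProduct_self_eq_zero.1 h)
  have contract : ∀ (S : Matrix (Fin n) (Fin n) ℝ), Sᵀ = -S → ∀ u : Fin n → ℝ,
      en (((1 : Matrix (Fin n) (Fin n) ℝ) + S)⁻¹ *ᵥ u) ≤ en u := by
    intro S hS u
    have hdet := det1S S hS
    set x := ((1 : Matrix (Fin n) (Fin n) ℝ) + S)⁻¹ *ᵥ u with hx
    have hFx : ((1 : Matrix (Fin n) (Fin n) ℝ) + S) *ᵥ x = u := by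
      rw [hx, mulVec_mulVec, mul_nonsing_inv _ hdet, one_mulVec]
    have hsq : en u ^ 2 = en x ^ 2 + en (S *ᵥ x) ^ 2 := by
      rw [en_sq, en_sq, en_sq, ← hFx, add_mulVec, one_mulVec, dotProduct_add,
        add_dotProduct, add_dotProduct]
      have h1 := skewdp S hS x
      have h2 : (S *ᵥ x) ⬝ᵥ x = 0 := by rw [dotProduct_comm]; exact h1
      rw [h1, h2]; ring
    nlinarith [en_nonneg u, en_nonneg x, sq_nonneg (en (S *ᵥ x)), sq_nonneg (en x - en u),
      sq_nonneg (en x + en u)]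
  have detFt : IsUnit Ft.det := det1S Nt hNtskew
  have hFtT : Ftᵀ = (1 : Matrix (Fin n) (Fin n) ℝ) + -Nt := by
    rw [hFtdef, transpose_add, transpose_one, hNtskew]
  have detFtT : IsUnit (Ftᵀ).det := by rw [det_transpose]; exact detFt
  have hGtv : ∀ u, en (Ft⁻¹ *ᵥ u) ≤ en u := fun u => contract Nt hNtskew u
  have hGtTv : ∀ u, en ((Ft⁻¹)ᵀ *ᵥ u) ≤ en u := by
    intro u
    have h := contract (-Nt) (by rw [transpose_neg, hNtskew, neg_neg]) u
    rw [← hFtT] at h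
    rw [transpose_nonsing_inv]
    exact h
  -- F and B factorizations
  have hRNR : R1 * Nt * R1 = N := by
    rw [hNtdef, Matrix.mul_assoc, Matrix.mul_assoc, Matrix.nonsing_inv_mul _ hdR1,
      Matrix.mul_one, ← Matrix.mul_assoc, Matrix.mul_nonsing_inv _ hdR1, Matrix.one_mul]
  have hFeq : F = R1 * Ft * R1 := by
    rw [hFtdef, Matrix.mul_add, Matrix.mul_one, Matrix.add_mul, hR1sq, hRNR, hFsum]
  have detF : IsUnit F.det := by
    rw [hFeq, det_mul, det_mul]
    exact (hdR1.mul detFt).mul hdR1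
  have hFinv : F⁻¹ = R1⁻¹ * Ft⁻¹ * R1⁻¹ := by
    rw [hFeq, Matrix.mul_inv_rev, Matrix.mul_inv_rev, Matrix.mul_assoc]
  have hFinvT : (F⁻¹)ᵀ = R1⁻¹ * (Ft⁻¹)ᵀ * R1⁻¹ := by
    rw [hFinv, transpose_mul, transpose_mul, hR1isym, Matrix.mul_assoc]
  have hBeq : B = R2 * Bt * R1 := by
    rw [hBtdef, Matrix.mul_assoc, Matrix.mul_assoc, Matrix.nonsing_inv_mul _ hdR1,
      Matrix.mul_one, ← Matrix.mul_assoc, Matrix.mul_nonsing_inv _ hdR2, Matrix.one_mul]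
  have hBTeq : Bᵀ = R1 * Btᵀ * R2 := by
    rw [hBeq, transpose_mul, transpose_mul, hR1sym, hR2sym, Matrix.mul_assoc]
  -- pointwise bounds from hypotheses
  have hNpt := AuxSP.forall_of_wnorm_le hfacH1 hfacH1i hdR1 hNnorm
  have hBpt := AuxSP.forall_of_wnorm_le hfacH1 hfacH2i hdR1 hBnorm
  have hNtv : ∀ u, en (Nt *ᵥ u) ≤ η * en u := by
    intro u
    have h := hNpt (R1⁻¹ *ᵥ u)
    rw [AuxSP.vnorm_factor hfacH1i, AuxSP.vnorm_factor hfacH1] at h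
    have e1 : R1⁻¹ *ᵥ (N *ᵥ (R1⁻¹ *ᵥ u)) = Nt *ᵥ u := by
      rw [mulVec_mulVec, mulVec_mulVec, hNtdef]
    have e2 : R1 *ᵥ (R1⁻¹ *ᵥ u) = u := by
      rw [mulVec_mulVec, mul_nonsing_inv _ hdR1, one_mulVec]
    rwa [e1, e2] at h
  have hBtv : ∀ u, en (Bt *ᵥ u) ≤ C₁ * en u := by
    intro u
    have h := hBpt (R1⁻¹ *ᵥ u)
    rw [AuxSP.vnorm_factor hfacH2i, AuxSP.vnorm_factor hfacH1] at h
    have e1 : R2⁻¹ *ᵥ (B *ᵥ (R1⁻¹ *ᵥ u)) = Bt *ᵥ u := by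
      rw [mulVec_mulVec, mulVec_mulVec, hBtdef]
    have e2 : R1 *ᵥ (R1⁻¹ *ᵥ u) = u := by
      rw [mulVec_mulVec, mul_nonsing_inv _ hdR1, one_mulVec]
    rwa [e1, e2] at h
  have hBtTv : ∀ u, en (Btᵀ *ᵥ u) ≤ C₁ * en u := by
    intro u
    by_cases h0 : Btᵀ *ᵥ u = 0
    · rw [h0, en_zero]
      exact mul_nonneg hC1.le (en_nonneg u)
    · have key : en (Btᵀ *ᵥ u) ^ 2 = u ⬝ᵥ (Bt *ᵥ (Btᵀ *ᵥ u)) := by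
        rw [en_sq]
        conv_rhs => rw [dotProduct_mulVec, ← mulVec_transpose]
      have h1 : u ⬝ᵥ (Bt *ᵥ (Btᵀ *ᵥ u)) ≤ en u * en (Bt *ᵥ (Btᵀ *ᵥ u)) := dp_le_en_mul _ _
      have h2 : en (Bt *ᵥ (Btᵀ *ᵥ u)) ≤ C₁ * en (Btᵀ *ᵥ u) := hBtv _
      have h3 : 0 < en (Btᵀ *ᵥ u) := en_pos h0
      nlinarith [en_nonneg u]
  have hStv : ∀ u, en (St *ᵥ u) ≤ C₁ ^ 2 * en u := by
    intro u
    have e : St *ᵥ u = Btᵀ *ᵥ (Bt *ᵥ u) := by rw [mulVec_mulVec, hStdef]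
    rw [e]
    calc en (Btᵀ *ᵥ (Bt *ᵥ u)) ≤ C₁ * en (Bt *ᵥ u) := hBtTv _
      _ ≤ C₁ * (C₁ * en u) := mul_le_mul_of_nonneg_left (hBtv u) hC1.le
      _ = C₁ ^ 2 * en u := by ring
  -- block structure of the saddle matrix
  set S := Bᵀ * H2⁻¹ * B with hSdef
  have hH2isym : H2⁻¹ᵀ = H2⁻¹ := by rw [transpose_nonsing_inv, hH2sym]
  have hSsym : Sᵀ = S := by
    rw [hSdef, transpose_mul, transpose_mul, hH2isym, transpose_transpose, Matrix.mul_assoc]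
  have hSeq : S = R1 * St * R1 := by
    rw [hSdef, hBTeq, hH2i, hBeq, hStdef]
    simp only [Matrix.mul_assoc, Matrix.mul_nonsing_inv_cancel_left R2,
      Matrix.nonsing_inv_mul_cancel_left R2, hdR2]
  have hMUinv : MU⁻¹ = fromBlocks F⁻¹ (-(F⁻¹ * (Bᵀ * H2⁻¹))) 0 H2⁻¹ := by
    apply inv_eq_right_inv
    rw [hMU, fromBlocks_multiply]
    have e11 : F * F⁻¹ + Bᵀ * (0 : Matrix (Fin m) (Fin n) ℝ) = 1 := by
      rw [mul_nonsing_inv _ detF, Matrix.mul_zero, add_zero]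
    have e12 : F * -(F⁻¹ * (Bᵀ * H2⁻¹)) + Bᵀ * H2⁻¹ = 0 := by
      rw [Matrix.mul_neg, Matrix.mul_nonsing_inv_cancel_left _ _ detF, neg_add_cancel]
    have e21 : (0 : Matrix (Fin m) (Fin n) ℝ) * F⁻¹ + H2 * (0 : Matrix (Fin m) (Fin n) ℝ) = 0 := by
      rw [Matrix.zero_mul, Matrix.mul_zero, add_zero]
    have e22 : (0 : Matrix (Fin m) (Fin n) ℝ) * -(F⁻¹ * (Bᵀ * H2⁻¹)) + H2 * H2⁻¹ = 1 := by
      rw [Matrix.zero_mul, mul_nonsing_inv _ hdH2, zero_add]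
    rw [e11, e12, e21, e22, fromBlocks_one]
  have hQ : MU⁻¹ * K = fromBlocks (1 - F⁻¹ * S) (F⁻¹ * Bᵀ) (H2⁻¹ * B) 0 := by
    rw [hMUinv, hK, fromBlocks_multiply]
    have e11 : F⁻¹ * F + -(F⁻¹ * (Bᵀ * H2⁻¹)) * B = 1 - F⁻¹ * S := by
      rw [nonsing_inv_mul _ detF, Matrix.neg_mul, hSdef, Matrix.mul_assoc, Matrix.mul_assoc,
        sub_eq_add_neg]
    have e12 : F⁻¹ * Bᵀ + -(F⁻¹ * (Bᵀ * H2⁻¹)) * (0 : Matrix (Fin m) (Fin m) ℝ) = F⁻¹ * Bᵀ := by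
      rw [Matrix.mul_zero, add_zero]
    have e21 : (0 : Matrix (Fin m) (Fin n) ℝ) * F + H2⁻¹ * B = H2⁻¹ * B := by
      rw [Matrix.zero_mul, zero_add]
    have e22 : (0 : Matrix (Fin m) (Fin n) ℝ) * Bᵀ + H2⁻¹ * (0 : Matrix (Fin m) (Fin m) ℝ) = 0 := by
      rw [Matrix.zero_mul, Matrix.mul_zero, add_zero]
    rw [e11, e12, e21, e22]
  set T11 := S * (F⁻¹)ᵀ * H1 - H1 * (F⁻¹ * S) with hT11def
  set T12 := H1 * (F⁻¹ * Bᵀ) - Bᵀ with hT12def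
  set T21 := B - B * ((F⁻¹)ᵀ * H1) with hT21def
  have hHQ : H * (MU⁻¹ * K) = fromBlocks (H1 * (1 - F⁻¹ * S)) (H1 * (F⁻¹ * Bᵀ)) B 0 := by
    rw [hH, hQ, fromBlocks_multiply, fromBlocks_inj]
    refine ⟨?_, ?_, ?_, ?_⟩
    · rw [Matrix.zero_mul, add_zero]
    · rw [Matrix.zero_mul, add_zero]
    · rw [Matrix.zero_mul, zero_add, Matrix.mul_nonsing_inv_cancel_left _ _ hdH2]
    · rw [Matrix.zero_mul, Matrix.mul_zero, zero_add]
  have hQT : (MU⁻¹ * K)ᵀ * H = fromBlocks ((1 - F⁻¹ * S)ᵀ * H1) ((H2⁻¹ * B)ᵀ * H2)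
      ((F⁻¹ * Bᵀ)ᵀ * H1) 0 := by
    rw [hQ, hH, fromBlocks_transpose, transpose_zero, fromBlocks_multiply, fromBlocks_inj]
    refine ⟨?_, ?_, ?_, ?_⟩
    · rw [Matrix.mul_zero, add_zero]
    · rw [Matrix.mul_zero, zero_add]
    · rw [Matrix.zero_mul, add_zero]
    · rw [Matrix.mul_zero, Matrix.zero_mul, add_zero]
  have hTh : H * (MU⁻¹ * K) - (MU⁻¹ * K)ᵀ * H = fromBlocks T11 T12 T21 0 := by
    rw [hHQ, hQT, AuxSP.fromBlocks_sub, fromBlocks_inj]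
    refine ⟨?_, ?_, ?_, ?_⟩
    · rw [hT11def, Matrix.mul_sub, Matrix.mul_one, transpose_sub, transpose_one,
        Matrix.sub_mul, Matrix.one_mul, transpose_mul, hSsym]
      abel
    · rw [hT12def, transpose_mul, hH2isym, Matrix.mul_assoc,
        nonsing_inv_mul _ hdH2, Matrix.mul_one]
    · rw [hT21def, transpose_mul, transpose_transpose, Matrix.mul_assoc]
    · rw [sub_zero]
  -- sandwich forms of the blocks
  have hT11s : T11 = R1 * (Ft⁻¹ * ((Nt * St + St * Nt) * (Ft⁻¹)ᵀ)) * R1 := by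
    have key : Nt * St + St * Nt = Ft * St - St * Ftᵀ := by
      rw [hFtT, hFtdef]; noncomm_ring
    have h1 : Ft⁻¹ * ((Nt * St + St * Nt) * (Ft⁻¹)ᵀ) = St * (Ft⁻¹)ᵀ - Ft⁻¹ * St := by
      rw [key, transpose_nonsing_inv, Matrix.sub_mul, Matrix.mul_sub]
      congr 1
      · rw [← Matrix.mul_assoc, ← Matrix.mul_assoc, nonsing_inv_mul _ detFt, Matrix.one_mul]
      · rw [Matrix.mul_assoc St, mul_nonsing_inv _ detFtT, Matrix.mul_one]
    rw [h1, hT11def, hSeq, hFinvT, hFinv, ← hR1sq]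
    simp only [Matrix.mul_sub, Matrix.sub_mul, Matrix.mul_assoc,
      Matrix.mul_nonsing_inv_cancel_left R1, Matrix.nonsing_inv_mul_cancel_left R1, hdR1]
  have hT12s : T12 = R1 * (-(Ft⁻¹ * (Nt * Btᵀ))) * R2 := by
    have h1 : -(Ft⁻¹ * (Nt * Btᵀ)) = Ft⁻¹ * Btᵀ - Btᵀ := by
      have h2 : Nt = Ft - 1 := by rw [hFtdef]; noncomm_ring
      rw [h2, Matrix.sub_mul, Matrix.one_mul, Matrix.mul_sub,
        Matrix.nonsing_inv_mul_cancel_left _ _ detFt, neg_sub]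
    rw [h1, hT12def, hFinv, hBTeq, ← hR1sq]
    simp only [Matrix.mul_sub, Matrix.sub_mul, Matrix.mul_assoc,
      Matrix.mul_nonsing_inv_cancel_left R1, Matrix.nonsing_inv_mul_cancel_left R1, hdR1]
  have hT21s : T21 = R2 * (-(Bt * (Nt * (Ft⁻¹)ᵀ))) * R1 := by
    have h1 : -(Bt * (Nt * (Ft⁻¹)ᵀ)) = Bt - Bt * (Ft⁻¹)ᵀ := by
      have h2 : Nt = 1 - Ftᵀ := by rw [hFtT]; noncomm_ring
      rw [h2, transpose_nonsing_inv, Matrix.sub_mul, Matrix.one_mul,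
        mul_nonsing_inv _ detFtT, Matrix.mul_sub, Matrix.mul_one, neg_sub]
    rw [h1, hT21def, hFinvT, hBeq, ← hR1sq]
    simp only [Matrix.mul_sub, Matrix.sub_mul, Matrix.mul_assoc,
      Matrix.mul_nonsing_inv_cancel_left R1, Matrix.nonsing_inv_mul_cancel_left R1, hdR1]
  -- inverse and factorization of the block diagonal H
  have hHinv : H⁻¹ = fromBlocks H1⁻¹ 0 0 H2⁻¹ := by
    apply inv_eq_right_inv
    rw [hH, fromBlocks_multiply, mul_nonsing_inv _ hdH1, mul_nonsing_inv _ hdH2]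
    simp only [Matrix.mul_zero, Matrix.zero_mul, add_zero, zero_add]
    exact fromBlocks_one
  set RH := fromBlocks R1 0 0 R2 with hRHdef
  have hfacH : RHᵀ * RH = H := by
    rw [hRHdef, fromBlocks_transpose, fromBlocks_multiply, hR1sym, hR2sym, hH]
    simp only [transpose_zero, Matrix.mul_zero, Matrix.zero_mul, add_zero, zero_add,
      hR1sq, hR2sq]
  have detRH : IsUnit RH.det := by
    rw [hRHdef, det_fromBlocks_zero₂₁]
    exact hdR1.mul hdR2
  have hcnn : (0:ℝ) ≤ (2 * C₁ ^ 2 + 4 * C₁) * η :=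
    mul_nonneg (by nlinarith [sq_nonneg C₁]) hη.le
  refine AuxSP.wnorm_le_of_forall hcnn hfacH detRH ?_
  intro w
  have hw : w = Sum.elim (w ∘ Sum.inl) (w ∘ Sum.inr) := (Sum.elim_comp_inl_inr w).symm
  set v1 := w ∘ Sum.inl with hv1def
  set v2 := w ∘ Sum.inr with hv2def
  obtain ⟨u1, hu1def⟩ : ∃ u, u = R1 *ᵥ v1 := ⟨_, rfl⟩
  obtain ⟨u2, hu2def⟩ : ∃ u, u = R2 *ᵥ v2 := ⟨_, rfl⟩
  have hx : (H * (MU⁻¹ * K) - (MU⁻¹ * K)ᵀ * H) *ᵥ w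
      = Sum.elim (T11 *ᵥ v1 + T12 *ᵥ v2) (T21 *ᵥ v1) := by
    rw [hTh, fromBlocks_mulVec, ← hv1def, ← hv2def, zero_mulVec, add_zero]
  have hLHS : vnorm H⁻¹ ((H * (MU⁻¹ * K) - (MU⁻¹ * K)ᵀ * H) *ᵥ w)
      = Real.sqrt (en (R1⁻¹ *ᵥ (T11 *ᵥ v1 + T12 *ᵥ v2)) ^ 2
          + en (R2⁻¹ *ᵥ (T21 *ᵥ v1)) ^ 2) := by
    rw [hx, vnorm, hHinv, fromBlocks_mulVec, Sum.elim_comp_inl, Sum.elim_comp_inr,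
      zero_mulVec, add_zero, zero_mulVec, zero_add, sumElim_dotProduct_sumElim,
      AuxSP.dp_factor hfacH1i, AuxSP.dp_factor hfacH2i, ← AuxSP.en_sq, ← AuxSP.en_sq]
  have hRHS : vnorm H w = Real.sqrt (en u1 ^ 2 + en u2 ^ 2) := by
    conv_lhs => rw [hw]
    rw [vnorm, hH, fromBlocks_mulVec, Sum.elim_comp_inl, Sum.elim_comp_inr,
      zero_mulVec, add_zero, zero_mulVec, zero_add, sumElim_dotProduct_sumElim,
      AuxSP.dp_factor hfacH1, AuxSP.dp_factor hfacH2, ← AuxSP.en_sq, ← AuxSP.en_sq,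
      ← hu1def, ← hu2def]
  -- the three vector estimates
  have hb1 : en (R1⁻¹ *ᵥ (T11 *ᵥ v1)) ≤ 2 * η * C₁ ^ 2 * en u1 := by
    rw [hT11s, AuxSP.inv_sandwich _ _ _ hdR1, ← hu1def]
    have hsp : (Ft⁻¹ * ((Nt * St + St * Nt) * (Ft⁻¹)ᵀ)) *ᵥ u1
        = Ft⁻¹ *ᵥ ((Nt * St + St * Nt) *ᵥ ((Ft⁻¹)ᵀ *ᵥ u1)) := by
      simp only [mulVec_mulVec, Matrix.mul_assoc]
    rw [hsp]
    obtain ⟨z, hzdef⟩ : ∃ z, z = (Ft⁻¹)ᵀ *ᵥ u1 := ⟨_, rfl⟩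
    rw [← hzdef]
    have hz : en z ≤ en u1 := hzdef ▸ hGtTv u1
    have hY : en ((Nt * St + St * Nt) *ᵥ z) ≤ 2 * η * C₁ ^ 2 * en z := by
      have hsp2 : (Nt * St + St * Nt) *ᵥ z = Nt *ᵥ (St *ᵥ z) + St *ᵥ (Nt *ᵥ z) := by
        simp only [add_mulVec, mulVec_mulVec]
      rw [hsp2]
      calc en (Nt *ᵥ (St *ᵥ z) + St *ᵥ (Nt *ᵥ z))
          ≤ en (Nt *ᵥ (St *ᵥ z)) + en (St *ᵥ (Nt *ᵥ z)) := en_add_le _ _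
        _ ≤ η * en (St *ᵥ z) + C₁ ^ 2 * en (Nt *ᵥ z) := add_le_add (hNtv _) (hStv _)
        _ ≤ η * (C₁ ^ 2 * en z) + C₁ ^ 2 * (η * en z) := add_le_add
            (mul_le_mul_of_nonneg_left (hStv z) hη.le)
            (mul_le_mul_of_nonneg_left (hNtv z) (by positivity))
        _ = 2 * η * C₁ ^ 2 * en z := by ring
    calc en (Ft⁻¹ *ᵥ ((Nt * St + St * Nt) *ᵥ z)) ≤ en ((Nt * St + St * Nt) *ᵥ z) := hGtv _
      _ ≤ 2 * η * C₁ ^ 2 * en z := hY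
      _ ≤ 2 * η * C₁ ^ 2 * en u1 := mul_le_mul_of_nonneg_left hz (by positivity)
  have hb2 : en (R1⁻¹ *ᵥ (T12 *ᵥ v2)) ≤ η * C₁ * en u2 := by
    rw [hT12s, AuxSP.inv_sandwich _ _ _ hdR1, ← hu2def, neg_mulVec, en_neg]
    have hsp : (Ft⁻¹ * (Nt * Btᵀ)) *ᵥ u2 = Ft⁻¹ *ᵥ (Nt *ᵥ (Btᵀ *ᵥ u2)) := by
      simp only [mulVec_mulVec, Matrix.mul_assoc]
    rw [hsp]
    calc en (Ft⁻¹ *ᵥ (Nt *ᵥ (Btᵀ *ᵥ u2))) ≤ en (Nt *ᵥ (Btᵀ *ᵥ u2)) := hGtv _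
      _ ≤ η * en (Btᵀ *ᵥ u2) := hNtv _
      _ ≤ η * (C₁ * en u2) := mul_le_mul_of_nonneg_left (hBtTv u2) hη.le
      _ = η * C₁ * en u2 := by ring
  have hb3 : en (R2⁻¹ *ᵥ (T21 *ᵥ v1)) ≤ η * C₁ * en u1 := by
    rw [hT21s, AuxSP.inv_sandwich _ _ _ hdR2, ← hu1def, neg_mulVec, en_neg]
    have hsp : (Bt * (Nt * (Ft⁻¹)ᵀ)) *ᵥ u1 = Bt *ᵥ (Nt *ᵥ ((Ft⁻¹)ᵀ *ᵥ u1)) := by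
      simp only [mulVec_mulVec, Matrix.mul_assoc]
    rw [hsp]
    calc en (Bt *ᵥ (Nt *ᵥ ((Ft⁻¹)ᵀ *ᵥ u1))) ≤ C₁ * en (Nt *ᵥ ((Ft⁻¹)ᵀ *ᵥ u1)) := hBtv _
      _ ≤ C₁ * (η * en ((Ft⁻¹)ᵀ *ᵥ u1)) := mul_le_mul_of_nonneg_left (hNtv _) hC1.le
      _ ≤ C₁ * (η * en u1) := by
          have hgg := hGtTv u1
          nlinarith [en_nonneg ((Ft⁻¹)ᵀ *ᵥ u1)]
      _ = η * C₁ * en u1 := by ring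
  have hbp : en (R1⁻¹ *ᵥ (T11 *ᵥ v1 + T12 *ᵥ v2))
      ≤ 2 * η * C₁ ^ 2 * en u1 + η * C₁ * en u2 := by
    rw [mulVec_add]
    calc en (R1⁻¹ *ᵥ (T11 *ᵥ v1) + R1⁻¹ *ᵥ (T12 *ᵥ v2))
        ≤ en (R1⁻¹ *ᵥ (T11 *ᵥ v1)) + en (R1⁻¹ *ᵥ (T12 *ᵥ v2)) := en_add_le _ _
      _ ≤ 2 * η * C₁ ^ 2 * en u1 + η * C₁ * en u2 := add_le_add hb1 hb2
  rw [hLHS, hRHS]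
  have hp2 : en (R1⁻¹ *ᵥ (T11 *ᵥ v1 + T12 *ᵥ v2)) ^ 2
      ≤ (2 * η * C₁ ^ 2 * en u1 + η * C₁ * en u2) ^ 2 :=
    pow_le_pow_left₀ (en_nonneg _) hbp 2
  have hq2 : en (R2⁻¹ *ᵥ (T21 *ᵥ v1)) ^ 2 ≤ (η * C₁ * en u1) ^ 2 :=
    pow_le_pow_left₀ (en_nonneg _) hb3 2
  have key : en (R1⁻¹ *ᵥ (T11 *ᵥ v1 + T12 *ᵥ v2)) ^ 2 + en (R2⁻¹ *ᵥ (T21 *ᵥ v1)) ^ 2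
      ≤ ((2 * C₁ ^ 2 + 4 * C₁) * η) ^ 2 * (en u1 ^ 2 + en u2 ^ 2) := by
    have ha := en_nonneg u1
    have hb := en_nonneg u2
    nlinarith [hp2, hq2,
      mul_nonneg (mul_nonneg (sq_nonneg η) (pow_nonneg hC1.le 3)) (sq_nonneg (en u1 - en u2)),
      mul_nonneg (mul_nonneg (sq_nonneg η) (pow_nonneg hC1.le 3)) (sq_nonneg (en u1)),
      mul_nonneg (mul_nonneg (sq_nonneg η) (pow_nonneg hC1.le 3)) (sq_nonneg (en u2)),
      mul_nonneg (mul_nonneg (sq_nonneg η) (sq_nonneg C₁)) (sq_nonneg (en u1)),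
      mul_nonneg (mul_nonneg (sq_nonneg η) (sq_nonneg C₁)) (sq_nonneg (en u2)),
      mul_nonneg (mul_nonneg (sq_nonneg η) (pow_nonneg hC1.le 4)) (sq_nonneg (en u2))]
  calc Real.sqrt (en (R1⁻¹ *ᵥ (T11 *ᵥ v1 + T12 *ᵥ v2)) ^ 2 + en (R2⁻¹ *ᵥ (T21 *ᵥ v1)) ^ 2)
      ≤ Real.sqrt (((2 * C₁ ^ 2 + 4 * C₁) * η) ^ 2 * (en u1 ^ 2 + en u2 ^ 2)) :=
        Real.sqrt_le_sqrt key
    _ = (2 * C₁ ^ 2 + 4 * C₁) * η * Real.sqrt (en u1 ^ 2 + en u2 ^ 2) := by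
        rw [Real.sqrt_mul (sq_nonneg _), Real.sqrt_sq hcnn]
end
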